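/- If A + C is convex with nonempty interior of C and for every w* ∈ W* either inf_{a∈A} w*(a) = -∞ or inf_{a∈A} w*(a) < inf_{b∈B} w*(b), then B ⊆ int(A + C). -/

import Mathlib

open Pointwise Set Filter Topology

/-- Scalarization of a set `A ⊆ Y` by a weak-star functional: `inf {w(a) : a ∈ A}` in `EReal`
(with `inf ∅ = +∞`). -/
noncomputable def scal {Y : Type*} [AddCommMonoid Y] [Module ℝ Y] [TopologicalSpace Y]
    (w : WeakDual ℝ Y) (A : Set Y) : EReal :=
  sInf ((fun a => ((w a : ℝ) : EReal)) '' A)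

theorem stmt_5 {Y : Type*} [AddCommGroup Y] [Module ℝ Y] [TopologicalSpace Y]
    [IsTopologicalAddGroup Y] [ContinuousSMul ℝ Y] [LocallyConvexSpace ℝ Y] [T2Space Y]
    (C : Set Y) (hclosed : IsClosed C) (hconv : Convex ℝ C)
    (hcone : ∀ c ∈ C, ∀ r : ℝ, 0 ≤ r → r • c ∈ C)
    (hint : (interior C).Nonempty) (hCne : C ≠ Set.univ)
    (Wstar : Set (WeakDual ℝ Y)) (hWcpt : IsCompact Wstar)
    (hWsub : ∀ w ∈ Wstar, ∀ c ∈ C, 0 ≤ w c) (hW0 : (0 : WeakDual ℝ Y) ∉ Wstar)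
    (hWbase : ∀ w : WeakDual ℝ Y, (∀ c ∈ C, 0 ≤ w c) → w ≠ 0 →
      ∃ t : ℝ, 0 < t ∧ ∃ w' ∈ Wstar, w = t • w')
    (A B : Set Y) (hAC : Convex ℝ (A + C))
    (h : ∀ w ∈ Wstar, scal w A = ⊥ ∨ scal w A < scal w B) :
    B ⊆ interior (A + C) := by
  obtain ⟨e₀, he₀⟩ := hint
  have he₀C : e₀ ∈ C := interior_subset he₀
  have h0C : (0 : Y) ∈ C := by
    have := hcone e₀ he₀C 0 le_rfl
    simpa using this
  intro b hb
  by_contra hbI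
  rcases A.eq_empty_or_nonempty with hA | ⟨a₀, ha₀⟩
  · -- A empty: derive contradiction from any w ∈ Wstar
    obtain ⟨x, hx⟩ : ∃ x, x ∉ C := by
      by_contra hc
      push_neg at hc
      exact hCne (Set.eq_univ_of_forall hc)
    obtain ⟨f, u, hfu, hux⟩ := geometric_hahn_banach_closed_point hconv hclosed hx
    have hu0 : 0 < u := by simpa using hfu 0 h0C
    have hfneg : ∀ c ∈ C, f c ≤ 0 := by
      intro c hc
      by_contra hpos
      push_neg at hpos
      have hr : (0:ℝ) ≤ (u + 1) / f c := by positivity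
      have := hfu _ (hcone c hc _ hr)
      rw [map_smul, smul_eq_mul, div_mul_cancel₀ _ (ne_of_gt hpos)] at this
      linarith
    have hne : (-f : Y →L[ℝ] ℝ) ≠ 0 := by
      intro h0
      have : (-f) x = 0 := by rw [h0]; rfl
      simp only [ContinuousLinearMap.neg_apply] at this
      linarith
    obtain ⟨t, ht, w', hw', heq⟩ := hWbase (-f : Y →L[ℝ] ℝ)
      (fun c hc => by
        show (0:ℝ) ≤ -(f c)
        linarith [hfneg c hc]) hne
    have := h w' hw'
    rw [hA] at this
    simp only [scal, Set.image_empty, sInf_empty] at this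
    rcases this with h1 | h1
    · exact absurd h1 (by simp)
    · exact absurd h1 (not_top_lt)
  · -- A nonempty
    have hCC : ∀ c₁ ∈ C, ∀ c₂ ∈ C, c₁ + c₂ ∈ C := by
      intro c₁ h1 c₂ h2
      have hhalf : (1/2 : ℝ) • c₁ + (1/2 : ℝ) • c₂ ∈ C :=
        hconv h1 h2 (by norm_num) (by norm_num) (by norm_num)
      have := hcone _ hhalf 2 (by norm_num)
      rw [smul_add, smul_smul, smul_smul] at this
      norm_num at this
      exact this
    have hCint : ∀ c ∈ C, ∀ e ∈ interior C, c + e ∈ interior C := by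
      intro c hc e he
      have hopen : IsOpen ({c} + interior C) := IsOpen.add_left isOpen_interior
      have hsub : {c} + interior C ⊆ C := by
        rintro _ ⟨x, hx, y, hy, rfl⟩
        rw [Set.mem_singleton_iff] at hx
        subst hx
        exact hCC _ hc y (interior_subset hy)
      exact interior_maximal hsub hopen (Set.add_mem_add rfl he)
    have htint : ∀ t : ℝ, 0 < t → t • e₀ ∈ interior C := by
      intro t ht
      have h1 : t • e₀ ∈ t • interior C := Set.smul_mem_smul_set he₀
      rw [← interior_smul₀ (ne_of_gt ht)] at h1
      refine interior_mono ?_ h1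
      rintro x ⟨y, hy, rfl⟩
      exact hcone y hy t ht.le
    have hsubint : A + interior C ⊆ interior (A + C) :=
      interior_maximal (Set.add_subset_add_left interior_subset)
        (IsOpen.add_left isOpen_interior)
    obtain ⟨f, hf⟩ := geometric_hahn_banach_point_open hAC.interior isOpen_interior hbI
    -- key inequality
    have key : ∀ a ∈ A, ∀ c ∈ C, f b ≤ f a + f c := by
      intro a ha c hc
      have step : ∀ t : ℝ, 0 < t → f b < f a + f c + t * f e₀ := by
        intro t ht
        have hmem : a + (c + t • e₀) ∈ A + interior C :=
          Set.add_mem_add ha (hCint c hc _ (htint t ht))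
        have := hf _ (hsubint hmem)
        simpa [map_add, map_smul, smul_eq_mul, add_assoc] using this
      refine le_of_forall_pos_le_add fun ε hε => ?_
      have ht : 0 < ε / (|f e₀| + 1) := by positivity
      have h1 := step _ ht
      have h2 : ε / (|f e₀| + 1) * f e₀ ≤ ε := by
        rw [div_mul_eq_mul_div, div_le_iff₀ (by positivity)]
        have : f e₀ ≤ |f e₀| + 1 := (le_abs_self _).trans (by linarith)
        nlinarith [abs_nonneg (f e₀), hε.le]
      linarith
    have keyA : ∀ a ∈ A, f b ≤ f a := fun a ha => by simpa using key a ha 0 h0C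
    have hfpos : ∀ c ∈ C, 0 ≤ f c := by
      intro c hc
      by_contra hneg
      push_neg at hneg
      set s : ℝ := (f a₀ - f b + 1) / (-f c) with hs
      have hs0 : 0 < s := div_pos (by linarith [keyA a₀ ha₀]) (by linarith)
      have hkey := key a₀ ha₀ _ (hcone c hc s hs0.le)
      rw [map_smul, smul_eq_mul] at hkey
      have hfc : f c ≠ 0 := ne_of_lt hneg
      have hsc : s * f c = -(f a₀ - f b + 1) := by
        rw [hs]; field_simp
      linarith
    have hfne : (f : Y →L[ℝ] ℝ) ≠ 0 := by
      intro h0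
      have hmem : a₀ + e₀ ∈ interior (A + C) :=
        hsubint (Set.add_mem_add ha₀ he₀)
      have := hf _ hmem
      rw [h0] at this
      simp at this
    obtain ⟨t, ht, w', hw', heq⟩ := hWbase f hfpos hfne
    have happly : ∀ y : Y, f y = t * w' y := fun y => DFunLike.congr_fun heq y
    have hwb_le : scal w' B ≤ ((w' b : ℝ) : EReal) := sInf_le ⟨b, hb, rfl⟩
    have hle : ((w' b : ℝ) : EReal) ≤ scal w' A := by
      apply le_sInf
      rintro x ⟨a, ha, rfl⟩
      have h1 : f b ≤ f a := keyA a ha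
      rw [happly b, happly a] at h1
      have h2 : w' b ≤ w' a := le_of_mul_le_mul_left h1 ht
      show ((w' b : ℝ) : EReal) ≤ ((w' a : ℝ) : EReal)
      exact_mod_cast h2
    rcases h w' hw' with h1 | h1
    · rw [h1] at hle
      exact absurd hle (EReal.bot_lt_coe _).not_ge
    · exact absurd (h1.trans_le (hwb_le.trans hle)) (lt_irrefl _)
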